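/- arXiv:1705.02929 — 3 statements merged into one kernel-verified Lean document; each statement's English description precedes it below -/
import Mathlib

section
/- Let G be a permutation group on a finite set Ω. Then every element of the center of G lies in the center of the 2-closure G^(2) of G; that is, Z(G) ≤ Z(G^(2)). -/
open scoped Classical Pointwise

noncomputable section

variable {H : Type*}

/-- The simple quantity of a subset `T` of `H` in the group algebra `ℚ H`. -/
def simpleQ [Group H] [Fintype H] (T : Set H) : MonoidAlgebra ℚ H :=
  ∑ h ∈ T.toFinset, MonoidAlgebra.single h (1 : ℚ)

/-- An S-ring over a finite group `H`: a partition of `H` containing `{1}`,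
closed under inversion, whose simple quantities span a subalgebra of `ℚ H`. -/
structure SRing (H : Type*) [Group H] [Fintype H] where
  basicSets : Set (Set H)
  exists_unique_mem : ∀ h : H, ∃! T, T ∈ basicSets ∧ h ∈ T
  nonempty_of_mem : ∀ T ∈ basicSets, T.Nonempty
  one_mem : ({1} : Set H) ∈ basicSets
  inv_mem : ∀ T ∈ basicSets, T⁻¹ ∈ basicSets
  mul_mem : ∀ T ∈ basicSets, ∀ S ∈ basicSets,
    simpleQ T * simpleQ S ∈ Submodule.span ℚ (simpleQ '' basicSets)

namespace SRing

variable [Group H] [Fintype H]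

/-- The underlying ℚ-subspace of the S-ring. -/
def carrier (A : SRing H) : Submodule ℚ (MonoidAlgebra ℚ H) :=
  Submodule.span ℚ (simpleQ '' A.basicSets)

/-- `S` is an `𝒜`-subset: its simple quantity lies in `𝒜`. -/
def IsSubset (A : SRing H) (S : Set H) : Prop := simpleQ S ∈ A.carrier

/-- The thin radical of the S-ring. -/
def thin (A : SRing H) : Set H := {g | ({g} : Set H) ∈ A.basicSets}

end SRing

/-- The radical of a subset `S`: elements `h` with `hS = Sh = S`. -/
def radSet [Group H] (S : Set H) : Set H := {h | {h} * S = S ∧ S * {h} = S}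

/-- The automorphism group of the Cayley digraph `Cay(H, T)`. -/
def cayAut [Group H] (T : Set H) : Subgroup (Equiv.Perm H) where
  carrier := {g | ∀ x y : H, y * x⁻¹ ∈ T ↔ g y * (g x)⁻¹ ∈ T}
  one_mem' := by intro x y; simp
  mul_mem' := by
    intro a b ha hb x y
    simpa [Equiv.Perm.mul_apply] using (hb x y).trans (ha (b x) (b y))
  inv_mem' := by
    intro a ha x y
    simpa using (ha (a⁻¹ x) (a⁻¹ y)).symm

/-- The automorphism group of an S-ring. -/
def SRing.aut [Group H] [Fintype H] (A : SRing H) : Subgroup (Equiv.Perm H) :=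
  ⨅ T ∈ A.basicSets, cayAut T

/-- The right regular representation of `H` inside `Sym(H)`. -/
def rightRegular (H : Type*) [Group H] : Subgroup (Equiv.Perm H) where
  carrier := Set.range fun h : H => Equiv.mulRight h
  one_mem' := ⟨1, by ext x; simp⟩
  mul_mem' := by
    rintro _ _ ⟨a, rfl⟩ ⟨b, rfl⟩
    exact ⟨b * a, by ext x; simp [mul_assoc]⟩
  inv_mem' := by
    rintro _ ⟨a, rfl⟩
    exact ⟨a⁻¹, by ext x; simp⟩

/-- The orbit of `h` under the stabilizer of the identity in `G ≤ Sym(H)`. -/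
def orbitOfStab [Group H] (G : Subgroup (Equiv.Perm H)) (h : H) : Set H :=
  {x | ∃ g ∈ G, g 1 = 1 ∧ g h = x}

/-- A Schurian S-ring: its basic sets are the orbits of the identity-stabilizer
of some overgroup of the right regular representation. -/
def SRing.IsSchurian [Group H] [Fintype H] (A : SRing H) : Prop :=
  ∃ G : Subgroup (Equiv.Perm H), rightRegular H ≤ G ∧
    A.basicSets = {S | ∃ h : H, S = orbitOfStab G h}

/-- A p-S-ring: all basic sets have `p`-power size. -/
def SRing.IsPSRing [Group H] [Fintype H] (A : SRing H) (p : ℕ) : Prop :=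
  ∀ T ∈ A.basicSets, ∃ k : ℕ, Nat.card T = p ^ k

/-- A decomposable S-ring: a nontrivial `E/F`-wreath product. -/
def SRing.Decomposable [Group H] [Fintype H] (A : SRing H) : Prop :=
  ∃ E F : Subgroup H, F.Normal ∧ F ≤ E ∧ E ≠ ⊤ ∧ F ≠ ⊥ ∧
    A.IsSubset ↑E ∧ A.IsSubset ↑F ∧
    ∀ T ∈ A.basicSets, T ⊆ ((E : Set H))ᶜ → (F : Set H) ⊆ radSet T

/-- The 2-closure of a permutation group `G ≤ Sym(Ω)`: all permutations
preserving every `G`-orbit on `Ω × Ω`. -/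
def twoClosure {Ω : Type*} (G : Subgroup (Equiv.Perm Ω)) : Subgroup (Equiv.Perm Ω) where
  carrier := {γ | ∀ a b : Ω, ∃ g ∈ G, g a = γ a ∧ g b = γ b}
  one_mem' := fun a b => ⟨1, G.one_mem, rfl, rfl⟩
  mul_mem' := by
    intro γ δ hγ hδ a b
    obtain ⟨g, hg, hga, hgb⟩ := hδ a b
    obtain ⟨g', hg', hg'a, hg'b⟩ := hγ (δ a) (δ b)
    exact ⟨g' * g, G.mul_mem hg' hg, by simp [Equiv.Perm.mul_apply, hga, hg'a],
      by simp [Equiv.Perm.mul_apply, hgb, hg'b]⟩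
  inv_mem' := by
    intro γ hγ a b
    obtain ⟨g, hg, hga, hgb⟩ := hγ (γ⁻¹ a) (γ⁻¹ b)
    have h1 : g (γ⁻¹ a) = a := by rw [hga]; simp
    have h2 : g (γ⁻¹ b) = b := by rw [hgb]; simp
    refine ⟨g⁻¹, G.inv_mem hg, ?_, ?_⟩
    · exact g.injective (by rw [h1]; simp)
    · exact g.injective (by rw [h2]; simp)


/-- Z(G) ≤ Z(G^(2)). -/
theorem stmt0 {Ω : Type*} [Finite Ω] (G : Subgroup (Equiv.Perm Ω))
    (γ : Equiv.Perm Ω) (hγ : γ ∈ G) (hcen : ∀ x ∈ G, Commute γ x) :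
    γ ∈ twoClosure G ∧ ∀ x ∈ twoClosure G, Commute γ x := by
  constructor
  · intro a b; exact ⟨γ, hγ, rfl, rfl⟩
  · intro x hx
    have key : ∀ a : Ω, γ (x a) = x (γ a) := by
      intro a
      obtain ⟨g, hg, hga, hgb⟩ := hx a (γ a)
      have hc := hcen g hg
      have : (γ * g) a = (g * γ) a := by rw [hc.eq]
      simp only [Equiv.Perm.mul_apply] at this
      rw [← hga, ← hgb, this]
    ext a
    simp [Equiv.Perm.mul_apply, key]

end
end

section
/- Let 𝒜 be a p-S-ring over a finite p-group H, let K ≤ H be an 𝒜-subgroup of index p, and let T be a basic set of 𝒜. Then T is contained in a single coset of K; in particular, rad(T) ≤ K. -/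
open scoped Classical Pointwise

noncomputable section

variable {H : Type*}

lemma simpleQ_apply' [Group H] [Fintype H] (S : Set H) (x : H) :
    (simpleQ S).coeff x = if x ∈ S then 1 else 0 := by
  rw [simpleQ, MonoidAlgebra.coeff_sum, Finsupp.finset_sum_apply]
  simp only [MonoidAlgebra.coeff_single, Finsupp.single_apply]
  rw [Finset.sum_ite_eq']
  simp [Set.mem_toFinset]

lemma mul_simpleQ_apply' [Group H] [Fintype H] (T S : Set H) (x : H) :
    (simpleQ T * simpleQ S).coeff x = ((T.toFinset.filter (fun t => t⁻¹ * x ∈ S)).card : ℚ) := by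
  rw [simpleQ, simpleQ, Finset.sum_mul_sum]
  simp only [MonoidAlgebra.single_mul_single, one_mul]
  rw [MonoidAlgebra.coeff_sum, Finsupp.finset_sum_apply, Finset.card_filter]
  push_cast
  refine Finset.sum_congr rfl fun t ht => ?_
  rw [MonoidAlgebra.coeff_sum, Finsupp.finset_sum_apply]
  simp only [MonoidAlgebra.coeff_single, Finsupp.single_apply]
  have : ∀ s : H, (t * s = x) = (t⁻¹ * x = s) := fun s =>
    propext ⟨fun h => by simp [← h], fun h => by simp [← h]⟩
  simp only [this]
  rw [Finset.sum_ite_eq]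
  simp [Set.mem_toFinset]

lemma aux_basic_mem_carrier [Group H] [Fintype H] (A : SRing H) {T : Set H}
    (hT : T ∈ A.basicSets) : simpleQ T ∈ A.carrier :=
  Submodule.subset_span ⟨T, hT, rfl⟩

lemma aux_mul_mem_carrier [Group H] [Fintype H] (A : SRing H) {a b : MonoidAlgebra ℚ H}
    (ha : a ∈ A.carrier) (hb : b ∈ A.carrier) : a * b ∈ A.carrier := by
  have h : A.carrier * A.carrier ≤ A.carrier := by
    rw [SRing.carrier, Submodule.span_mul_span]
    apply Submodule.span_le.mpr
    rintro x ⟨a, ⟨S, hS, rfl⟩, b, ⟨S', hS', rfl⟩, rfl⟩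
    exact A.mul_mem _ hS _ hS'
  exact h (Submodule.mul_mem_mul ha hb)

lemma aux_const [Group H] [Fintype H] (A : SRing H) {f : MonoidAlgebra ℚ H}
    (hf : f ∈ A.carrier) {T : Set H} (hT : T ∈ A.basicSets) {x y : H}
    (hx : x ∈ T) (hy : y ∈ T) : f.coeff x = f.coeff y := by
  induction hf using Submodule.span_induction with
  | mem g hg =>
    obtain ⟨S, hS, rfl⟩ := hg
    rw [simpleQ_apply', simpleQ_apply']
    by_cases hxS : x ∈ S
    · have : S = T := (A.exists_unique_mem x).unique ⟨hS, hxS⟩ ⟨hT, hx⟩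
      subst this; simp [hx, hy]
    · have hyS : y ∉ S := fun hyS => hxS (by
        have : S = T := (A.exists_unique_mem y).unique ⟨hS, hyS⟩ ⟨hT, hy⟩
        subst this; exact hx)
      simp [hxS, hyS]
  | zero => simp
  | add a b _ _ iha ihb => rw [MonoidAlgebra.coeff_add, Finsupp.add_apply, Finsupp.add_apply, iha, ihb]
  | smul c a _ ih => rw [MonoidAlgebra.coeff_smul_apply, MonoidAlgebra.coeff_smul_apply, ih]

lemma aux_union [Group H] [Fintype H] (A : SRing H) {S : Set H}
    (hS : simpleQ S ∈ A.carrier) {T : Set H} (hT : T ∈ A.basicSets) {t : H}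
    (htT : t ∈ T) (htS : t ∈ S) : T ⊆ S := by
  intro y hy
  have := aux_const A hS hT hy htT
  rw [simpleQ_apply', simpleQ_apply'] at this
  simp [htS] at this
  by_contra hyS
  simp [hyS] at this

lemma aux_coset [Group H] [Fintype H] {p : ℕ} (hp : p.Prime)
    (A : SRing H) (hA : ∀ T ∈ A.basicSets, ∃ k : ℕ, Nat.card T = p ^ k)
    (K : Subgroup H) (hK : A.IsSubset ↑K) (hidx : K.index = p)
    (T : Set H) (hT : T ∈ A.basicSets) :
    ∃ h : H, ∀ t ∈ T, (QuotientGroup.mk t : H ⧸ K) = QuotientGroup.mk h := by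
  obtain ⟨t₀, ht₀⟩ := A.nonempty_of_mem T hT
  have : Fintype (H ⧸ K) := inferInstance
  set π : H → H ⧸ K := QuotientGroup.mk with hπ
  have hfmem : simpleQ T * simpleQ (K : Set H) ∈ A.carrier :=
    aux_mul_mem_carrier A (aux_basic_mem_carrier A hT) hK
  have hfilter : ∀ x : H, T.toFinset.filter (fun t => t⁻¹ * x ∈ (K : Set H))
      = T.toFinset.filter (fun t => π t = π x) := by
    intro x
    apply Finset.filter_congr
    intro t _
    simp only [hπ, SetLike.mem_coe]
    exact (QuotientGroup.eq).symm
  set N : H → ℕ := fun x => (T.toFinset.filter (fun t => π t = π x)).card with hNdef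
  have hN : ∀ t ∈ T, N t = N t₀ := by
    intro t ht
    have hc := aux_const A hfmem hT ht ht₀
    rw [mul_simpleQ_apply', mul_simpleQ_apply', hfilter, hfilter] at hc
    exact_mod_cast hc
  have hcount : T.toFinset.card = (T.toFinset.image π).card * N t₀ := by
    rw [Finset.card_eq_sum_card_fiberwise (fun a ha => Finset.mem_image_of_mem π ha)]
    rw [Finset.sum_congr rfl (fun q hq => ?_), Finset.sum_const, smul_eq_mul]
    obtain ⟨t, htT, rfl⟩ := Finset.mem_image.mp hq
    have : T.toFinset.filter (fun a => π a = π t) = T.toFinset.filter (fun a => π a = π t) := rfl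
    exact hN t (Set.mem_toFinset.mp htT)
  obtain ⟨k, hk⟩ := hA T hT
  have hcardT : T.toFinset.card = p ^ k := by
    rw [← hk, Nat.card_coe_set_eq, Set.ncard_eq_toFinset_card']
  set m := (T.toFinset.image π).card with hm
  have hmdvd : m ∣ p ^ k := ⟨N t₀, by rw [← hcount, hcardT]⟩
  obtain ⟨j, hjk, hmj⟩ := (Nat.dvd_prime_pow hp).mp hmdvd
  have hqcard : Fintype.card (H ⧸ K) = p := by
    rw [← Nat.card_eq_fintype_card, ← Subgroup.index_eq_card, hidx]
  rcases Nat.eq_zero_or_pos j with hj0 | hj1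
  · subst hj0
    rw [pow_zero] at hmj
    obtain ⟨a, ha⟩ := Finset.card_eq_one.mp hmj
    refine ⟨t₀, fun t ht => ?_⟩
    have h1 : π t ∈ T.toFinset.image π := Finset.mem_image_of_mem π (Set.mem_toFinset.mpr ht)
    have h2 : π t₀ ∈ T.toFinset.image π := Finset.mem_image_of_mem π (Set.mem_toFinset.mpr ht₀)
    rw [ha, Finset.mem_singleton] at h1 h2
    rw [h1, h2]
  · exfalso
    have hmp : m = p := by
      have h1 : m ≤ p := hqcard ▸ Finset.card_le_univ _
      have h2 : p ≤ m := by
        rw [hmj]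
        calc p = p ^ 1 := (pow_one p).symm
        _ ≤ p ^ j := Nat.pow_le_pow_right hp.pos hj1
      omega
    have huniv : T.toFinset.image π = Finset.univ :=
      Finset.eq_univ_of_card _ (by rw [← hm, hmp, ← hqcard])
    have hmem1 : π 1 ∈ T.toFinset.image π := huniv ▸ Finset.mem_univ _
    obtain ⟨t, htT, htq⟩ := Finset.mem_image.mp hmem1
    have htK : t ∈ K := by
      have := QuotientGroup.eq.mp htq
      simpa using (K.inv_mem_iff.mp (by simpa using this))
    have hTK : T ⊆ ↑K := aux_union A hK hT (Set.mem_toFinset.mp htT) htK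
    have hsub : T.toFinset.image π ⊆ {π 1} := by
      intro q hq
      obtain ⟨t', ht', rfl⟩ := Finset.mem_image.mp hq
      have ht'K : t' ∈ K := hTK (Set.mem_toFinset.mp ht')
      simp only [Finset.mem_singleton, hπ]
      exact QuotientGroup.eq.mpr (by simpa using K.inv_mem ht'K)
    have := Finset.card_le_card hsub
    rw [Finset.card_singleton] at this
    have := hp.two_le
    omega

/-- a basic set of a p-S-ring lies in a single coset of an
𝒜-subgroup of index p, and its radical is contained in that subgroup. -/
theorem stmt9 {H : Type*} [Group H] [Fintype H] {p : ℕ} (hp : p.Prime)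
    (hpH : IsPGroup p H) (A : SRing H) (hA : A.IsPSRing p)
    (K : Subgroup H) (hK : A.IsSubset ↑K) (hidx : K.index = p)
    (T : Set H) (hT : T ∈ A.basicSets) :
    (∃ h : H, T ⊆ (fun k => k * h) '' (K : Set H)) ∧ radSet T ⊆ ↑K := by
  have hTinv := A.inv_mem T hT
  obtain ⟨h, hh⟩ := aux_coset hp A (hA) K hK hidx T⁻¹ hTinv
  have hmain : ∀ t ∈ T, ∃ k ∈ (K : Set H), k * h⁻¹ = t := by
    intro t ht
    have hti : t⁻¹ ∈ T⁻¹ := Set.inv_mem_inv.mpr ht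
    have h2 := hh t⁻¹ hti
    have h3 : t * h ∈ K := by
      have := QuotientGroup.eq.mp h2
      simpa using this
    exact ⟨t * h, h3, by group⟩
  constructor
  · exact ⟨h⁻¹, fun t ht => by
      obtain ⟨k, hk, hkt⟩ := hmain t ht
      exact ⟨k, hk, hkt⟩⟩
  · intro g hg
    obtain ⟨t₀, ht₀⟩ := A.nonempty_of_mem T hT
    have hgt : g * t₀ ∈ T := by
      have h1 := hg.1
      rw [← h1]
      exact Set.mul_mem_mul rfl ht₀
    obtain ⟨k1, hk1, e1⟩ := hmain t₀ ht₀
    obtain ⟨k2, hk2, e2⟩ := hmain (g * t₀) hgt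
    have e1' : k1 = t₀ * h := by rw [← e1]; group
    have e2' : k2 = g * t₀ * h := by rw [← e2]; group
    have hgk : g = k2 * k1⁻¹ := by rw [e1', e2']; group
    rw [hgk]
    exact K.mul_mem hk2 (K.inv_mem hk1)


end
end

section
/- Let p be an odd prime, H ≅ (ℤ/p)³, and let 𝒜 be the exceptional S-ring over H, i.e., the transitivity module V(H, ⟨x⟩) where x is the unipotent automorphism given in coordinates by the 3×3 upper-triangular Jordan block with ones on the diagonal and superdiagonal. Then |Aut(𝒜)| = p⁴. -/
open scoped Classical Pointwise

noncomputable section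

variable {H : Type*}

/-- The unipotent Jordan map on `(ℤ/p)³` given by the upper-triangular Jordan
block with ones on the diagonal and superdiagonal. -/
def jordanMap {p : ℕ} (v : Fin 3 → ZMod p) : Fin 3 → ZMod p :=
  ![v 0 + v 1, v 1 + v 2, v 2]

namespace S17

variable {p : ℕ} [Fact p.Prime]

def jz (k : ZMod p) (v : Fin 3 → ZMod p) : Fin 3 → ZMod p :=
  ![v 0 + k * v 1 + (k * k - k) / 2 * v 2, v 1 + k * v 2, v 2]

lemma jz_apply0 (k : ZMod p) (v) : jz k v 0 = v 0 + k * v 1 + (k * k - k) / 2 * v 2 := rfl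
lemma jz_apply1 (k : ZMod p) (v) : jz k v 1 = v 1 + k * v 2 := rfl
lemma jz_apply2 (k : ZMod p) (v) : jz k v 2 = v 2 := rfl

lemma jz_zero (v : Fin 3 → ZMod p) : jz 0 v = v := by
  funext i; fin_cases i <;> simp [jz]

lemma jz_jz (h2 : (2 : ZMod p) ≠ 0) (a b : ZMod p) (v) :
    jz a (jz b v) = jz (a + b) v := by
  funext i
  fin_cases i <;> (simp [jz]; (try field_simp); (try ring))

lemma jz_sub (k : ZMod p) (v w : Fin 3 → ZMod p) : jz k (v - w) = jz k v - jz k w := by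
  funext i
  fin_cases i <;> simp [jz] <;> ring

lemma jz_zero_vec (k : ZMod p) : jz k 0 = 0 := by
  funext i; fin_cases i <;> simp [jz]

lemma jordanMap_eq (v : Fin 3 → ZMod p) : jordanMap v = jz 1 v := by
  funext i; fin_cases i <;> simp [jz, jordanMap]

lemma jordan_iter (h2 : (2 : ZMod p) ≠ 0) (n : ℕ) (v : Fin 3 → ZMod p) :
    jordanMap^[n] v = jz (n : ZMod p) v := by
  induction n with
  | zero => simp [jz_zero]
  | succ n ih =>
      rw [Function.iterate_succ_apply', ih, jordanMap_eq, jz_jz h2]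
      push_cast
      ring_nf

lemma exists_iter_iff (h2 : (2 : ZMod p) ≠ 0) (a b : Fin 3 → ZMod p) :
    (∃ n : ℕ, jordanMap^[n] a = b) ↔ (∃ k : ZMod p, jz k a = b) := by
  constructor
  · rintro ⟨n, rfl⟩; exact ⟨n, (jordan_iter h2 n a).symm⟩
  · rintro ⟨k, rfl⟩
    refine ⟨k.val, ?_⟩
    rw [jordan_iter h2]
    simp [ZMod.natCast_val, ZMod.cast_id]


lemma vec_zero_eq : (![0, 0, 0] : Fin 3 → ZMod p) = 0 := by
  funext i; fin_cases i <;> simp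

lemma core (h2 : (2 : ZMod p) ≠ 0) (h : (Fin 3 → ZMod p) → (Fin 3 → ZMod p))
    (h0 : h 0 = 0)
    (P : ∀ x y, ∃ k : ZMod p, jz k (y - x) = h y - h x) :
    ∃ k : ZMod p, ∀ v, h v = jz k v := by
  have key : ∀ x y : Fin 3 → ZMod p, ∃ k : ZMod p,
      (h y 0 - h x 0 = y 0 - x 0 + k * (y 1 - x 1) + (k * k - k) / 2 * (y 2 - x 2)) ∧
      (h y 1 - h x 1 = y 1 - x 1 + k * (y 2 - x 2)) ∧
      (h y 2 - h x 2 = y 2 - x 2) := by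
    intro x y
    obtain ⟨k, hk⟩ := P x y
    have e0 := congrFun hk 0
    have e1 := congrFun hk 1
    have e2 := congrFun hk 2
    simp only [jz_apply0, jz_apply1, jz_apply2, Pi.sub_apply] at e0 e1 e2
    exact ⟨k, by linear_combination -e0, by linear_combination -e1, by linear_combination -e2⟩
  set bet : ZMod p → ZMod p := fun t => h ![0, 0, t] 1 with hbet
  set al : ZMod p → ZMod p → ZMod p := fun s t => h ![0, s, t] 0 with hal
  have bet0 : bet 0 = 0 := by
    simp only [hbet, vec_zero_eq, h0, Pi.zero_apply]
  have al00 : al 0 0 = 0 := by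
    simp only [hal, vec_zero_eq, h0, Pi.zero_apply]
  -- structure of h
  have factH : ∀ v : Fin 3 → ZMod p,
      h v 0 = v 0 + al (v 1) (v 2) ∧ h v 1 = v 1 + bet (v 2) ∧ h v 2 = v 2 := by
    intro v
    obtain ⟨k, e0, e1, e2⟩ := key ![0, v 1, v 2] v
    obtain ⟨k', e0', e1', e2'⟩ := key ![0, 0, v 2] ![0, v 1, v 2]
    obtain ⟨k'', f0, f1, f2⟩ := key 0 v
    simp only [Matrix.cons_val_zero, Matrix.cons_val_one, Matrix.head_cons,
      Matrix.cons_val_two, Matrix.tail_cons, Pi.zero_apply, h0] at e0 e1 e2 e0' e1' e2' f0 f1 f2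
    refine ⟨?_, ?_, ?_⟩
    · linear_combination e0
    · linear_combination e1 + e1'
    · linear_combination f2
  -- the key quadratic relation
  have star : ∀ x1 y1 x2 y2 : ZMod p, ∃ k : ZMod p,
      (bet y2 - bet x2 = k * (y2 - x2)) ∧
      (al y1 y2 - al x1 x2 = k * (y1 - x1) + (k * k - k) / 2 * (y2 - x2)) := by
    intro x1 y1 x2 y2
    obtain ⟨k, e0, e1, e2⟩ := key ![0, x1, x2] ![0, y1, y2]
    obtain ⟨a0, a1, a2⟩ := factH ![0, x1, x2]
    obtain ⟨b0, b1, b2⟩ := factH ![0, y1, y2]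
    simp only [Matrix.cons_val_zero, Matrix.cons_val_one, Matrix.head_cons,
      Matrix.cons_val_two, Matrix.tail_cons] at e0 e1 e2 a0 a1 a2 b0 b1 b2
    refine ⟨k, ?_, ?_⟩
    · linear_combination e1 - b1 + a1
    · linear_combination e0 - b0 + a0
  have kdet : ∀ (c k k' : ZMod p), c ≠ 0 → k * c = k' * c → k = k' := by
    intro c k k' hc hkk
    exact mul_right_cancel₀ hc hkk
  -- slope function
  have claim1 : ∀ x2 y2 : ZMod p, x2 ≠ y2 →
      bet y2 - bet x2 = (al 1 y2 - al 0 y2) * (y2 - x2) := by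
    intro x2 y2 hne
    obtain ⟨k, hb, ha⟩ := star 0 1 x2 y2
    obtain ⟨k', hb', ha'⟩ := star 0 0 x2 y2
    have hc : y2 - x2 ≠ 0 := sub_ne_zero.mpr (Ne.symm hne)
    have hkk : k = k' := kdet _ _ _ hc (by linear_combination hb' - hb)
    subst hkk
    have hm : al 1 y2 - al 0 y2 = k := by linear_combination ha - ha'
    rw [hm]; linear_combination hb
  have claim2 : ∀ x2 y2 : ZMod p, x2 ≠ y2 →
      bet y2 - bet x2 = (al 1 x2 - al 0 x2) * (y2 - x2) := by
    intro x2 y2 hne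
    obtain ⟨k, hb, ha⟩ := star 1 0 x2 y2
    obtain ⟨k', hb', ha'⟩ := star 0 0 x2 y2
    have hc : y2 - x2 ≠ 0 := sub_ne_zero.mpr (Ne.symm hne)
    have hkk : k = k' := kdet _ _ _ hc (by linear_combination hb' - hb)
    subst hkk
    have hm : al 1 x2 - al 0 x2 = k := by linear_combination ha' - ha
    rw [hm]; linear_combination hb
  have claim3 : ∀ a b : ZMod p, al 1 a - al 0 a = al 1 b - al 0 b := by
    intro a b
    rcases eq_or_ne a b with rfl | hne
    · rfl
    · have h1 := claim1 b a (Ne.symm hne)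
      have h2' := claim2 b a (Ne.symm hne)
      have hc : a - b ≠ 0 := sub_ne_zero.mpr hne
      exact kdet _ _ _ hc (by linear_combination h2' - h1)
  obtain ⟨k, hk⟩ : ∃ k : ZMod p, ∀ a, al 1 a - al 0 a = k :=
    ⟨al 1 0 - al 0 0, fun a => claim3 a 0⟩
  have betlin : ∀ t : ZMod p, bet t = k * t := by
    intro t
    rcases eq_or_ne t 0 with rfl | ht
    · rw [bet0]; ring
    · have := claim1 0 t (Ne.symm ht)
      rw [bet0, hk t] at this
      linear_combination this
  have gam : ∀ t : ZMod p, al 0 t = (k * k - k) / 2 * t := by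
    intro t
    rcases eq_or_ne t 0 with rfl | ht
    · rw [al00]; ring
    · obtain ⟨k', hb, ha⟩ := star 0 0 0 t
      have hc : t - 0 ≠ 0 := by simpa using ht
      have hkk : k' = k := by
        refine kdet _ _ _ hc ?_
        rw [betlin t, bet0] at hb
        linear_combination -hb
      subst hkk
      rw [al00] at ha
      linear_combination ha
  have one_ne : (1 : ZMod p) ≠ 0 := one_ne_zero
  have allin : ∀ s t : ZMod p, al s t = k * s + (k * k - k) / 2 * t := by
    intro s t
    obtain ⟨k', hb, ha⟩ := star 0 s (t - 1) t
    have hc : t - (t - 1) ≠ 0 := by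
      intro hcc
      apply one_ne
      linear_combination hcc
    have hkk : k' = k := by
      refine kdet _ _ _ hc ?_
      rw [betlin t, betlin (t - 1)] at hb
      linear_combination -hb
    subst hkk
    rw [gam (t - 1)] at ha
    linear_combination ha
  refine ⟨k, fun v => ?_⟩
  obtain ⟨c0, c1, c2⟩ := factH v
  funext i
  fin_cases i <;> (simp only [jz, Matrix.cons_val_zero, Matrix.cons_val_one, Matrix.head_cons,
    Matrix.cons_val_two, Matrix.tail_cons, Fin.zero_eta, Fin.mk_one, Fin.isValue]; (try simp [c0, c1, c2, allin, betlin]); (try ring))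

end S17

namespace S17

variable {p : ℕ} [Fact p.Prime]

lemma toAdd_mul_inv (x y : Multiplicative (Fin 3 → ZMod p)) :
    Multiplicative.toAdd (y * x⁻¹) = Multiplicative.toAdd y - Multiplicative.toAdd x := by
  simp [sub_eq_add_neg]

lemma mem_cayAut {G : Type*} [Group G] (T : Set G) (g : Equiv.Perm G) :
    g ∈ cayAut T ↔ ∀ x y : G, y * x⁻¹ ∈ T ↔ g y * (g x)⁻¹ ∈ T := Iff.rfl

lemma mem_aut_iff (h2 : (2 : ZMod p) ≠ 0) (A : SRing (Multiplicative (Fin 3 → ZMod p)))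
    (hA : A.basicSets = {S : Set (Multiplicative (Fin 3 → ZMod p)) |
      ∃ v : Fin 3 → ZMod p,
        S = {w | ∃ n : ℕ, jordanMap^[n] v = Multiplicative.toAdd w}})
    (g : Equiv.Perm (Multiplicative (Fin 3 → ZMod p))) :
    g ∈ A.aut ↔ ∀ x y : Multiplicative (Fin 3 → ZMod p),
      ∃ k : ZMod p, jz k (Multiplicative.toAdd y - Multiplicative.toAdd x)
        = Multiplicative.toAdd (g y) - Multiplicative.toAdd (g x) := by
  have memT : ∀ (v : Fin 3 → ZMod p) (w : Multiplicative (Fin 3 → ZMod p)),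
      w ∈ {w : Multiplicative (Fin 3 → ZMod p) |
          ∃ n : ℕ, jordanMap^[n] v = Multiplicative.toAdd w}
        ↔ ∃ k : ZMod p, jz k v = Multiplicative.toAdd w := by
    intro v w
    exact exists_iter_iff h2 v _
  constructor
  · intro hg x y
    set T : Set (Multiplicative (Fin 3 → ZMod p)) :=
      {w | ∃ n : ℕ, jordanMap^[n] (Multiplicative.toAdd y - Multiplicative.toAdd x)
        = Multiplicative.toAdd w} with hT
    have hTmem : T ∈ A.basicSets := by rw [hA]; exact ⟨_, rfl⟩
    have hg1 : g ∈ cayAut T := Subgroup.mem_iInf.mp (Subgroup.mem_iInf.mp hg T) hTmem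
    have hmem : y * x⁻¹ ∈ T := by
      rw [hT, Set.mem_setOf_eq]
      exact ⟨0, by simp [toAdd_mul_inv, sub_eq_add_neg]⟩
    have h1 := ((mem_cayAut T g).mp hg1 x y).mp hmem
    rw [memT] at h1
    obtain ⟨k, hk⟩ := h1
    exact ⟨k, by rw [hk, toAdd_mul_inv]⟩
  · intro hrel
    refine Subgroup.mem_iInf.mpr fun T => Subgroup.mem_iInf.mpr fun hT => ?_
    rw [hA] at hT
    obtain ⟨v, rfl⟩ := hT
    refine (mem_cayAut _ g).mpr fun x y => ?_
    rw [memT, memT, toAdd_mul_inv, toAdd_mul_inv]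
    obtain ⟨k2, hk2⟩ := hrel x y
    constructor
    · rintro ⟨k1, hk1⟩
      exact ⟨k2 + k1, by rw [← jz_jz h2, hk1, hk2]⟩
    · rintro ⟨k1, hk1⟩
      refine ⟨-k2 + k1, ?_⟩
      rw [← jz_jz h2, hk1, ← hk2, jz_jz h2, neg_add_cancel, jz_zero]

def phi (h2 : (2 : ZMod p) ≠ 0) (k : ZMod p) (u : Fin 3 → ZMod p) :
    Equiv.Perm (Multiplicative (Fin 3 → ZMod p)) where
  toFun w := Multiplicative.ofAdd (jz k (Multiplicative.toAdd w) + u)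
  invFun w := Multiplicative.ofAdd (jz (-k) (Multiplicative.toAdd w - u))
  left_inv w := by
    simp only [toAdd_ofAdd, add_sub_cancel_right, jz_jz h2, neg_add_cancel, jz_zero, ofAdd_toAdd]
  right_inv w := by
    simp only [toAdd_ofAdd, jz_jz h2, add_neg_cancel, jz_zero, sub_add_cancel, ofAdd_toAdd]

lemma phi_apply (h2 : (2 : ZMod p) ≠ 0) (k : ZMod p) (u : Fin 3 → ZMod p) (w) :
    phi h2 k u w = Multiplicative.ofAdd (jz k (Multiplicative.toAdd w) + u) := rfl

lemma phi_mem (h2 : (2 : ZMod p) ≠ 0) (A : SRing (Multiplicative (Fin 3 → ZMod p)))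
    (hA : A.basicSets = {S : Set (Multiplicative (Fin 3 → ZMod p)) |
      ∃ v : Fin 3 → ZMod p,
        S = {w | ∃ n : ℕ, jordanMap^[n] v = Multiplicative.toAdd w}})
    (k : ZMod p) (u : Fin 3 → ZMod p) : phi h2 k u ∈ A.aut := by
  rw [mem_aut_iff h2 A hA]
  intro x y
  refine ⟨k, ?_⟩
  rw [phi_apply, phi_apply, toAdd_ofAdd, toAdd_ofAdd, jz_sub]
  abel

lemma classification (h2 : (2 : ZMod p) ≠ 0) (A : SRing (Multiplicative (Fin 3 → ZMod p)))
    (hA : A.basicSets = {S : Set (Multiplicative (Fin 3 → ZMod p)) |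
      ∃ v : Fin 3 → ZMod p,
        S = {w | ∃ n : ℕ, jordanMap^[n] v = Multiplicative.toAdd w}})
    (g : Equiv.Perm (Multiplicative (Fin 3 → ZMod p))) (hg : g ∈ A.aut) :
    ∃ (k : ZMod p) (u : Fin 3 → ZMod p), g = phi h2 k u := by
  rw [mem_aut_iff h2 A hA] at hg
  set u : Fin 3 → ZMod p := Multiplicative.toAdd (g 1) with hu
  set h : (Fin 3 → ZMod p) → (Fin 3 → ZMod p) :=
    fun v => Multiplicative.toAdd (g (Multiplicative.ofAdd v)) - u with hh
  have h0 : h 0 = 0 := by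
    rw [hh]; simp [hu]
  have P : ∀ x y, ∃ k : ZMod p, jz k (y - x) = h y - h x := by
    intro x y
    obtain ⟨k, hk⟩ := hg (Multiplicative.ofAdd x) (Multiplicative.ofAdd y)
    refine ⟨k, ?_⟩
    rw [hh]
    simp only [toAdd_ofAdd] at hk
    rw [hk]
    exact (sub_sub_sub_cancel_right _ _ _).symm
  obtain ⟨k, hk⟩ := core h2 h h0 P
  refine ⟨k, u, Equiv.ext fun w => ?_⟩
  have hw := hk (Multiplicative.toAdd w)
  rw [hh] at hw
  simp only [ofAdd_toAdd] at hw
  rw [phi_apply]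
  have : Multiplicative.toAdd (g w) = jz k (Multiplicative.toAdd w) + u := by
    rw [← hw]; abel
  rw [← this, ofAdd_toAdd]

end S17

/-- the exceptional S-ring over `ℤ_p³` (p odd) has automorphism
group of order `p⁴`. -/
theorem stmt17 {p : ℕ} [NeZero p] (hp : p.Prime) (hodd : Odd p)
    (A : SRing (Multiplicative (Fin 3 → ZMod p)))
    (hA : A.basicSets = {S : Set (Multiplicative (Fin 3 → ZMod p)) |
      ∃ v : Fin 3 → ZMod p,
        S = {w | ∃ n : ℕ, jordanMap^[n] v = Multiplicative.toAdd w}}) :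
    Nat.card A.aut = p ^ 4 := by
  haveI := Fact.mk hp
  have h2 : (2 : ZMod p) ≠ 0 := by
    intro hc
    have : ((2 : ℕ) : ZMod p) = 0 := by exact_mod_cast hc
    have hdvd := (ZMod.natCast_eq_zero_iff 2 p).mp this
    have := (Nat.prime_dvd_prime_iff_eq hp Nat.prime_two).mp hdvd
    rw [this] at hodd
    exact (Nat.not_odd_iff_even.mpr even_two) hodd
  have hbij : Function.Bijective
      (fun x : ZMod p × (Fin 3 → ZMod p) =>
        (⟨S17.phi h2 x.1 x.2, S17.phi_mem h2 A hA x.1 x.2⟩ : A.aut)) := by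
    constructor
    · rintro ⟨k, u⟩ ⟨k', u'⟩ hkk
      have hphi : S17.phi h2 k u = S17.phi h2 k' u' := by
        simpa using Subtype.ext_iff.mp hkk
      have heq : ∀ w, S17.jz k (Multiplicative.toAdd w) + u
          = S17.jz k' (Multiplicative.toAdd w) + u' := by
        intro w
        have h3 := congrArg (fun e : Equiv.Perm (Multiplicative (Fin 3 → ZMod p)) =>
          Multiplicative.toAdd (e w)) hphi
        simpa [S17.phi_apply] using h3
      have hu : u = u' := by
        have h4 := heq 1
        simpa [S17.jz_zero_vec] using h4
      subst hu
      have hk : k = k' := by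
        have h5 := congrFun (heq (Multiplicative.ofAdd ![0, 1, 0])) 0
        simp only [Pi.add_apply, toAdd_ofAdd, S17.jz_apply0, Matrix.cons_val_zero,
          Matrix.cons_val_one, Matrix.head_cons, Matrix.cons_val_two, Matrix.tail_cons] at h5
        linear_combination h5
      subst hk
      rfl
    · rintro ⟨g, hg⟩
      obtain ⟨k, u, rfl⟩ := S17.classification h2 A hA g hg
      exact ⟨(k, u), rfl⟩
  calc Nat.card A.aut = Nat.card (ZMod p × (Fin 3 → ZMod p)) :=
        (Nat.card_congr (Equiv.ofBijective _ hbij)).symm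
    _ = p ^ 4 := by
        simp [Nat.card_prod, Nat.card_zmod, Nat.card_fun]
        ring


end
end
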